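/- For every positive integer n, the number of partitions of n into an even number of distinct parts minus the number of partitions of n into an odd number of distinct parts equals (-1)^l if n = l(3l-1)/2 or n = l(3l+1)/2 for some positive integer l, and equals 0 otherwise. -/

import Mathlib

open Finset

namespace PentAux

def mx (S : Finset ℕ) : ℕ := S.sup id
noncomputable def mn (S : Finset ℕ) : ℕ := sInf (S : Set ℕ)

lemma sg_ex (S : Finset ℕ) : ∃ m, mx S < m ∨ mx S - m ∉ S := ⟨mx S + 1, Or.inl (Nat.lt_succ_self _)⟩

noncomputable def sg (S : Finset ℕ) : ℕ := Nat.find (sg_ex S)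

noncomputable def frk (S : Finset ℕ) : Finset ℕ :=
  if mn S ≤ sg S then insert (mx S + 1) ((S.erase (mn S)).erase (mx S - mn S + 1))
  else insert (sg S) (insert (mx S - sg S) (S.erase (mx S)))

section basic
variable {S : Finset ℕ}

lemma mx_mem (hne : S.Nonempty) : mx S ∈ S := by
  obtain ⟨a, ha, h⟩ := Finset.exists_mem_eq_sup S hne id
  simpa [mx, h] using ha

lemma le_mx {x : ℕ} (hx : x ∈ S) : x ≤ mx S := Finset.le_sup (f := id) hx

lemma mn_mem (hne : S.Nonempty) : mn S ∈ S := by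
  have : (S : Set ℕ).Nonempty := hne
  simpa [mn] using Nat.sInf_mem this

lemma mn_le {x : ℕ} (hx : x ∈ S) : mn S ≤ x := Nat.sInf_le (by simpa using hx)

lemma mn_pos (hne : S.Nonempty) (h0 : 0 ∉ S) : 0 < mn S :=
  Nat.pos_of_ne_zero fun h => h0 (h ▸ mn_mem hne)

lemma mn_le_mx (hne : S.Nonempty) : mn S ≤ mx S := mn_le (mx_mem hne)

lemma sg_pos (hne : S.Nonempty) : 0 < sg S := by
  rcases Nat.eq_zero_or_pos (sg S) with h | h
  · exfalso
    have hs := Nat.find_spec (sg_ex S)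
    rw [show Nat.find (sg_ex S) = sg S from rfl, h] at hs
    rcases hs with h' | h'
    · omega
    · exact h' (by simpa using mx_mem hne)
  · exact h

lemma sg_le_mx (h0 : 0 ∉ S) : sg S ≤ mx S := Nat.find_le (Or.inr (by simpa using h0))

lemma mx_sub_sg_not_mem (h0 : 0 ∉ S) : mx S - sg S ∉ S := by
  have hs := Nat.find_spec (sg_ex S)
  rcases hs with h | h
  · exact absurd h (by have := sg_le_mx (S := S) h0; unfold sg at this; omega)
  · exact h

lemma mem_of_lt_sg {j : ℕ} (hj : j < sg S) : mx S - j ∈ S := by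
  have := Nat.find_min (sg_ex S) hj
  push_neg at this
  exact this.2

lemma staircase (h0 : 0 ∉ S) {x : ℕ} (h1 : mx S - sg S < x) (h2 : x ≤ mx S) : x ∈ S := by
  have hs := sg_le_mx (S := S) h0
  have : x = mx S - (mx S - x) := by omega
  rw [this]
  exact mem_of_lt_sg (by omega)

lemma mn_le_stair (hne : S.Nonempty) (h0 : 0 ∉ S) : mn S ≤ mx S - sg S + 1 := by
  apply mn_le
  have h1 := sg_pos (S := S) hne
  have h2 := sg_le_mx (S := S) h0
  have := mem_of_lt_sg (S := S) (j := sg S - 1) (by omega)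
  convert this using 1
  omega

lemma sg_eq_of (T : Finset ℕ) (m : ℕ) (hm : 0 < m) (h1 : ∀ j < m, mx T - j ∈ T)
    (h2 : mx T - m ∉ T) (h3 : m ≤ mx T) : sg T = m := by
  apply le_antisymm
  · exact Nat.find_le (Or.inr h2)
  · unfold sg
    rw [Nat.le_find_iff]
    intro k hk
    push_neg
    exact ⟨by omega, h1 k hk⟩

lemma mx_eq_of (T : Finset ℕ) (m : ℕ) (hm : m ∈ T) (h : ∀ x ∈ T, x ≤ m) : mx T = m :=
  le_antisymm (Finset.sup_le h) (le_mx hm)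

lemma mn_eq_of (T : Finset ℕ) (m : ℕ) (hm : m ∈ T) (h : ∀ x ∈ T, m ≤ x) : mn T = m := by
  exact le_antisymm (mn_le hm) (h _ (mn_mem ⟨m, hm⟩))

end basic

def isFix (S : Finset ℕ) : Prop :=
  if mn S ≤ sg S then mx S + 1 = 2 * mn S else mx S = 2 * sg S

lemma le_sg_of {T : Finset ℕ} {m : ℕ} (h1 : ∀ j < m, mx T - j ∈ T) (hm : m ≤ mx T) :
    m ≤ sg T := by
  unfold sg
  rw [Nat.le_find_iff]
  intro k hk
  push_neg
  exact ⟨by omega, h1 k hk⟩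

lemma case1 {S : Finset ℕ} (hne : S.Nonempty) (h0 : 0 ∉ S) (hc : mn S ≤ sg S)
    (hfix : mx S + 1 ≠ 2 * mn S) :
    0 ∉ frk S ∧ (frk S).Nonempty ∧ (frk S).sum id = S.sum id ∧ (frk S).card + 1 = S.card ∧
    ¬ isFix (frk S) ∧ frk (frk S) = S := by
  have hsM : mn S ≤ mx S := mn_le_mx hne
  have hspos : 0 < mn S := mn_pos hne h0
  have hσM : sg S ≤ mx S := sg_le_mx h0
  have hstair0 : mn S ≤ mx S - sg S + 1 := mn_le_stair hne h0
  set M := mx S with hM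
  set s := mn S with hs
  set σ := sg S with hσ
  have h2s : 2 * s ≤ M := by omega
  have hM1 : M - s + 1 ∈ S := staircase h0 (by omega) (by omega)
  have hMS : M + 1 ∉ S := fun h => by have := le_mx h; omega
  have hsmem : s ∈ S := mn_mem hne
  have hT : frk S = insert (M + 1) ((S.erase s).erase (M - s + 1)) := by
    rw [frk, if_pos hc]
  set T := frk S with hTdef
  have hmemT : ∀ x, x ∈ T ↔ x = M + 1 ∨ (x ∈ S ∧ x ≠ s ∧ x ≠ M - s + 1) := by
    intro x
    rw [hT]
    simp only [Finset.mem_insert, Finset.mem_erase]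
    tauto
  have h0T : 0 ∉ T := by
    rw [hmemT]
    push_neg
    exact ⟨by omega, fun h => absurd h h0⟩
  have hneT : T.Nonempty := ⟨M + 1, (hmemT _).2 (Or.inl rfl)⟩
  have hmxT : mx T = M + 1 := by
    apply mx_eq_of _ _ ((hmemT _).2 (Or.inl rfl))
    intro x hx
    rcases (hmemT x).1 hx with h | ⟨h, _, _⟩
    · omega
    · have := le_mx h; omega
  have hsgT : sg T = s := by
    apply sg_eq_of T s hspos ?_ ?_ (by omega)
    · intro j hj
      rw [hmxT, hmemT]
      rcases Nat.eq_zero_or_pos j with rfl | hj0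
      · left; omega
      · right
        refine ⟨staircase h0 (by omega) (by omega), by omega, by omega⟩
    · rw [hmxT]
      intro h
      rcases (hmemT _).1 h with h' | ⟨_, _, h3⟩
      · omega
      · exact h3 (by omega)
  have hmnT : s < mn T := by
    have hm := mn_mem hneT
    rcases (hmemT _).1 hm with h | ⟨hx, hxs, _⟩
    · omega
    · have := mn_le hx
      rw [← hs] at this
      omega
  -- sum
  have hM1e : M - s + 1 ∈ S.erase s := Finset.mem_erase.2 ⟨by omega, hM1⟩
  have e1 : (∑ x ∈ S.erase s, id x) + id s = ∑ x ∈ S, id x := Finset.sum_erase_add _ _ hsmem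
  have e2 : (∑ x ∈ (S.erase s).erase (M - s + 1), id x) + id (M - s + 1)
      = ∑ x ∈ S.erase s, id x := Finset.sum_erase_add _ _ hM1e
  have hM1ne : M + 1 ∉ (S.erase s).erase (M - s + 1) := by
    intro h
    exact hMS (Finset.mem_of_mem_erase (Finset.mem_of_mem_erase h))
  have e3 : T.sum id = id (M + 1) + ∑ x ∈ (S.erase s).erase (M - s + 1), id x := by
    rw [hT, Finset.sum_insert hM1ne]
  have hsum : T.sum id = S.sum id := by
    simp only [id] at e1 e2 e3 ⊢
    omega
  -- card
  have c1 : (S.erase s).card + 1 = S.card := Finset.card_erase_add_one hsmem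
  have c2 : ((S.erase s).erase (M - s + 1)).card + 1 = (S.erase s).card :=
    Finset.card_erase_add_one hM1e
  have c3 : T.card = ((S.erase s).erase (M - s + 1)).card + 1 := by
    rw [hT, Finset.card_insert_of_notMem hM1ne]
  have hcard : T.card + 1 = S.card := by omega
  -- not fixed
  have hcT : ¬ (mn T ≤ sg T) := by omega
  have hfixT : ¬ isFix T := by
    rw [isFix, if_neg hcT, hmxT, hsgT]
    omega
  refine ⟨h0T, hneT, hsum, hcard, hfixT, ?_⟩
  -- involution
  rw [frk, if_neg hcT, hsgT, hmxT, show M + 1 - s = M - s + 1 by omega]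
  have hTe : T.erase (M + 1) = (S.erase s).erase (M - s + 1) := by
    rw [hT, Finset.erase_insert hM1ne]
  rw [hTe, Finset.insert_erase hM1e, Finset.insert_erase hsmem]


lemma case2 {S : Finset ℕ} (hne : S.Nonempty) (h0 : 0 ∉ S) (hc : ¬ (mn S ≤ sg S))
    (hfix : mx S ≠ 2 * sg S) :
    0 ∉ frk S ∧ (frk S).Nonempty ∧ (frk S).sum id = S.sum id ∧ S.card + 1 = (frk S).card ∧
    ¬ isFix (frk S) ∧ frk (frk S) = S := by
  have hsM : mn S ≤ mx S := mn_le_mx hne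
  have hspos : 0 < mn S := mn_pos hne h0
  have hσpos : 0 < sg S := sg_pos hne
  have hσM : sg S ≤ mx S := sg_le_mx h0
  have hstair0 : mn S ≤ mx S - sg S + 1 := mn_le_stair hne h0
  have hσnot : mx S - sg S ∉ S := mx_sub_sg_not_mem h0
  set M := mx S with hM
  set s := mn S with hs
  set σ := sg S with hσ
  have h2σ : 2 * σ < M := by omega
  have hMmem : M ∈ S := mx_mem hne
  have hσS : σ ∉ S := fun h => hc (mn_le h)
  have hT : frk S = insert σ (insert (M - σ) (S.erase M)) := by
    rw [frk, if_neg hc]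
  set T := frk S with hTdef
  have hmemT : ∀ x, x ∈ T ↔ x = σ ∨ x = M - σ ∨ (x ∈ S ∧ x ≠ M) := by
    intro x
    rw [hT]
    simp only [Finset.mem_insert, Finset.mem_erase]
    tauto
  have h0T : 0 ∉ T := by
    rw [hmemT]
    push_neg
    exact ⟨by omega, by omega, fun h => absurd h h0⟩
  have hneT : T.Nonempty := ⟨σ, (hmemT _).2 (Or.inl rfl)⟩
  have hmxT : mx T = M - 1 := by
    apply mx_eq_of
    · rw [hmemT]
      rcases Nat.lt_or_ge σ 2 with h1 | h1
      · right; left; omega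
      · right; right
        exact ⟨staircase h0 (by omega) (by omega), by omega⟩
    · intro x hx
      rcases (hmemT x).1 hx with h | h | ⟨h, hne'⟩
      · omega
      · omega
      · have := le_mx h; omega
  have hmnT : mn T = σ := by
    apply mn_eq_of _ _ ((hmemT _).2 (Or.inl rfl))
    intro x hx
    rcases (hmemT x).1 hx with h | h | ⟨h, _⟩
    · omega
    · omega
    · have := mn_le h; rw [← hs] at this; omega
  have hsgT : σ ≤ sg T := by
    apply le_sg_of
    · intro j hj
      rw [hmxT, hmemT]
      rcases Nat.lt_or_ge j (σ - 1) with h | h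
      · right; right
        exact ⟨staircase h0 (by omega) (by omega), by omega⟩
      · right; left; omega
    · rw [hmxT]; omega
  -- sum and card
  have hMne : M - σ ∉ S.erase M := fun h => hσnot (Finset.mem_of_mem_erase h)
  have hσne : σ ∉ insert (M - σ) (S.erase M) := by
    intro h
    rcases Finset.mem_insert.1 h with h | h
    · omega
    · exact hσS (Finset.mem_of_mem_erase h)
  have e1 : T.sum id = id σ + (insert (M - σ) (S.erase M)).sum id := by
    rw [hT, Finset.sum_insert hσne]
  have e2 : (insert (M - σ) (S.erase M)).sum id = id (M - σ) + (S.erase M).sum id :=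
    Finset.sum_insert hMne
  have e3 : (∑ x ∈ S.erase M, id x) + id M = ∑ x ∈ S, id x := Finset.sum_erase_add _ _ hMmem
  have hsum : T.sum id = S.sum id := by
    simp only [id] at e1 e2 e3 ⊢
    omega
  have c1 : (S.erase M).card + 1 = S.card := Finset.card_erase_add_one hMmem
  have c2 : (insert (M - σ) (S.erase M)).card = (S.erase M).card + 1 :=
    Finset.card_insert_of_notMem hMne
  have c3 : T.card = (insert (M - σ) (S.erase M)).card + 1 := by
    rw [hT, Finset.card_insert_of_notMem hσne]
  have hcard : S.card + 1 = T.card := by omega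
  have hcT : mn T ≤ sg T := by rw [hmnT]; exact hsgT
  have hfixT : ¬ isFix T := by
    rw [isFix, if_pos hcT, hmxT, hmnT]
    omega
  refine ⟨h0T, hneT, hsum, hcard, hfixT, ?_⟩
  rw [frk, if_pos hcT, hmnT, hmxT, show M - 1 + 1 = M by omega,
    show M - 1 - σ + 1 = M - σ by omega]
  have hTe1 : T.erase σ = insert (M - σ) (S.erase M) := by
    rw [hT, Finset.erase_insert hσne]
  rw [hTe1, Finset.erase_insert hMne, Finset.insert_erase hMmem]

lemma frk_spec {S : Finset ℕ} (hne : S.Nonempty) (h0 : 0 ∉ S) (hfx : ¬ isFix S) :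
    0 ∉ frk S ∧ (frk S).Nonempty ∧ (frk S).sum id = S.sum id ∧
    ((frk S).card + 1 = S.card ∨ S.card + 1 = (frk S).card) ∧
    ¬ isFix (frk S) ∧ frk (frk S) = S := by
  by_cases hc : mn S ≤ sg S
  · rw [isFix, if_pos hc] at hfx
    obtain ⟨a, b, c, d, e, f⟩ := case1 hne h0 hc hfx
    exact ⟨a, b, c, Or.inl d, e, f⟩
  · rw [isFix, if_neg hc] at hfx
    obtain ⟨a, b, c, d, e, f⟩ := case2 hne h0 hc hfx
    exact ⟨a, b, c, Or.inr d, e, f⟩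

lemma sum_Icc_two (a b : ℕ) : 2 * (∑ i ∈ Finset.Icc a b, i) = (a + b) * (b + 1 - a) := by
  induction b with
  | zero =>
    rcases Nat.eq_zero_or_pos a with rfl | ha
    · simp
    · rw [Finset.Icc_eq_empty (by omega)]
      simp
      omega
  | succ b ih =>
    by_cases h : a ≤ b + 1
    · have : Finset.Icc a (b + 1) = insert (b + 1) (Finset.Icc a b) := by
        ext x
        simp only [Finset.mem_Icc, Finset.mem_insert]
        omega
      rw [this, Finset.sum_insert (by simp [Finset.mem_Icc])]
      zify [h, show a ≤ b + 2 by omega] at ih ⊢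
      linear_combination ih
    · rw [Finset.Icc_eq_empty (by omega)]
      simp
      omega

lemma fix_char {S : Finset ℕ} (hne : S.Nonempty) (h0 : 0 ∉ S) (hfx : isFix S) :
    (0 < mn S ∧ 2 * S.sum id = mn S * (3 * mn S - 1) ∧ S.card = mn S ∧
      S = Finset.Icc (mn S) (2 * mn S - 1)) ∨
    (0 < sg S ∧ 2 * S.sum id = sg S * (3 * sg S + 1) ∧ S.card = sg S ∧
      S = Finset.Icc (sg S + 1) (2 * sg S)) := by
  have hsM : mn S ≤ mx S := mn_le_mx hne
  have hspos : 0 < mn S := mn_pos hne h0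
  have hσpos : 0 < sg S := sg_pos hne
  have hσM : sg S ≤ mx S := sg_le_mx h0
  have hstair0 : mn S ≤ mx S - sg S + 1 := mn_le_stair hne h0
  set M := mx S with hM
  set s := mn S with hs
  set σ := sg S with hσ
  by_cases hc : s ≤ σ
  · left
    rw [isFix, if_pos hc] at hfx
    -- M = 2s - 1, σ = s
    have hσs : σ = s := by omega
    have Seq : S = Finset.Icc s (2 * s - 1) := by
      ext x
      rw [Finset.mem_Icc]
      constructor
      · intro hx
        exact ⟨mn_le hx, by have := le_mx hx; omega⟩
      · intro ⟨h1, h2⟩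
        exact staircase h0 (by omega) (by omega)
    refine ⟨hspos, ?_, ?_, Seq⟩
    · rw [Seq]
      have := sum_Icc_two s (2 * s - 1)
      simp only [id]
      rw [this, show s + (2*s-1) = 3*s-1 by omega, show 2*s-1+1-s = s by omega]
      ring
    · rw [Seq, Nat.card_Icc]
      omega
  · right
    rw [isFix, if_neg hc] at hfx
    -- M = 2σ, s = σ + 1
    have hss : s = σ + 1 := by omega
    have Seq : S = Finset.Icc (σ + 1) (2 * σ) := by
      ext x
      rw [Finset.mem_Icc]
      constructor
      · intro hx
        have := mn_le hx
        have := le_mx hx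
        omega
      · intro ⟨h1, h2⟩
        exact staircase h0 (by omega) (by omega)
    refine ⟨hσpos, ?_, ?_, Seq⟩
    · rw [Seq]
      have := sum_Icc_two (σ + 1) (2 * σ)
      simp only [id]
      rw [this, show σ+1 + 2*σ = 3*σ+1 by omega, show 2*σ+1-(σ+1) = σ by omega]
      ring
    · rw [Seq, Nat.card_Icc]
      omega

lemma stair1_spec (l : ℕ) (hl : 0 < l) :
    (Finset.Icc l (2 * l - 1)).Nonempty ∧ 0 ∉ Finset.Icc l (2 * l - 1) ∧
    2 * (Finset.Icc l (2 * l - 1)).sum id = l * (3 * l - 1) ∧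
    (Finset.Icc l (2 * l - 1)).card = l ∧ isFix (Finset.Icc l (2 * l - 1)) := by
  set S := Finset.Icc l (2 * l - 1) with hS
  have hmem : ∀ x, x ∈ S ↔ l ≤ x ∧ x ≤ 2 * l - 1 := fun x => Finset.mem_Icc
  have hne : S.Nonempty := ⟨l, (hmem l).2 ⟨le_refl l, by omega⟩⟩
  have h0 : 0 ∉ S := fun h => by have := (hmem 0).1 h; omega
  have hmx : mx S = 2 * l - 1 := by
    apply mx_eq_of _ _ ((hmem _).2 ⟨by omega, le_refl _⟩)
    intro x hx; exact ((hmem x).1 hx).2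
  have hmn : mn S = l := by
    apply mn_eq_of _ _ ((hmem _).2 ⟨le_refl _, by omega⟩)
    intro x hx; exact ((hmem x).1 hx).1
  have hsg : sg S = l := by
    apply sg_eq_of _ _ hl
    · intro j hj
      rw [hmx, hmem]
      omega
    · rw [hmx, hmem]
      omega
    · rw [hmx]; omega
  refine ⟨hne, h0, ?_, by rw [Nat.card_Icc]; omega, ?_⟩
  · have := sum_Icc_two l (2 * l - 1)
    simp only [id]
    rw [hS, this, show l + (2*l-1) = 3*l-1 by omega, show 2*l-1+1-l = l by omega]
    ring
  · rw [isFix, if_pos (by rw [hmn, hsg]), hmx, hmn]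
    omega

lemma stair2_spec (l : ℕ) (hl : 0 < l) :
    (Finset.Icc (l + 1) (2 * l)).Nonempty ∧ 0 ∉ Finset.Icc (l + 1) (2 * l) ∧
    2 * (Finset.Icc (l + 1) (2 * l)).sum id = l * (3 * l + 1) ∧
    (Finset.Icc (l + 1) (2 * l)).card = l ∧ isFix (Finset.Icc (l + 1) (2 * l)) := by
  set S := Finset.Icc (l + 1) (2 * l) with hS
  have hmem : ∀ x, x ∈ S ↔ l + 1 ≤ x ∧ x ≤ 2 * l := fun x => Finset.mem_Icc
  have hne : S.Nonempty := ⟨l + 1, (hmem _).2 ⟨le_refl _, by omega⟩⟩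
  have h0 : 0 ∉ S := fun h => by have := (hmem 0).1 h; omega
  have hmx : mx S = 2 * l := by
    apply mx_eq_of _ _ ((hmem _).2 ⟨by omega, le_refl _⟩)
    intro x hx; exact ((hmem x).1 hx).2
  have hmn : mn S = l + 1 := by
    apply mn_eq_of _ _ ((hmem _).2 ⟨le_refl _, by omega⟩)
    intro x hx; exact ((hmem x).1 hx).1
  have hsg : sg S = l := by
    apply sg_eq_of _ _ hl
    · intro j hj
      rw [hmx, hmem]
      omega
    · rw [hmx, hmem]
      omega
    · rw [hmx]; omega
  refine ⟨hne, h0, ?_, by rw [Nat.card_Icc]; omega, ?_⟩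
  · have := sum_Icc_two (l + 1) (2 * l)
    simp only [id]
    rw [hS, this, show l + 1 + 2*l = 3*l+1 by omega, show 2*l+1-(l+1) = l by omega]
    ring
  · rw [isFix, if_neg (by rw [hmn, hsg]; omega), hmx, hsg]

lemma pent1_inj {a b : ℕ} (ha : 0 < a) (hb : 0 < b) (h : a * (3 * a - 1) = b * (3 * b - 1)) :
    a = b := by
  zify [show 1 ≤ 3 * a by omega, show 1 ≤ 3 * b by omega] at h
  rcases lt_trichotomy a b with hl | hl | hl
  · exfalso
    have : (a : ℤ) + 1 ≤ b := by exact_mod_cast hl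
    nlinarith
  · exact hl
  · exfalso
    have : (b : ℤ) + 1 ≤ a := by exact_mod_cast hl
    nlinarith

lemma pent2_inj {a b : ℕ} (h : a * (3 * a + 1) = b * (3 * b + 1)) : a = b := by
  rcases lt_trichotomy a b with hl | hl | hl
  · exfalso; nlinarith
  · exact hl
  · exfalso; nlinarith

lemma pent_ne {a b : ℕ} (ha : 0 < a) (hb : 0 < b) : a * (3 * a - 1) ≠ b * (3 * b + 1) := by
  intro h
  zify [show 1 ≤ 3 * a by omega] at h
  rcases le_or_gt a b with hl | hl
  · have : (a : ℤ) ≤ b := by exact_mod_cast hl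
    nlinarith
  · have : (b : ℤ) + 1 ≤ a := by exact_mod_cast hl
    nlinarith

def E (n : ℕ) : Finset (Finset ℕ) :=
  (Finset.range (n + 1)).powerset.filter fun S => 0 ∉ S ∧ S.sum id = n

lemma mem_E {n : ℕ} {S : Finset ℕ} : S ∈ E n ↔ 0 ∉ S ∧ S.sum id = n := by
  rw [E, Finset.mem_filter, Finset.mem_powerset]
  constructor
  · exact fun h => h.2
  · intro h
    refine ⟨fun x hx => Finset.mem_range.2 ?_, h⟩
    have hle : id x ≤ S.sum id := Finset.single_le_sum (fun i _ => Nat.zero_le (id i)) hx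
    have h2 := h.2
    simp only [id] at hle h2
    omega

lemma E_nonempty {n : ℕ} (hn : 0 < n) {S : Finset ℕ} (h : S ∈ E n) : S.Nonempty := by
  rcases S.eq_empty_or_nonempty with rfl | h'
  · exfalso
    have := (mem_E.1 h).2
    simp at this
    omega
  · exact h'

lemma key_nofix {n : ℕ} (hn : 0 < n) (hno : ∀ S ∈ E n, ¬ isFix S) :
    ∑ S ∈ E n, (-1 : ℤ) ^ S.card = 0 := by
  apply Finset.sum_involution (fun S _ => frk S)
  · intro S hS
    obtain ⟨h0, hsum⟩ := mem_E.1 hS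
    obtain ⟨_, _, _, hcard, _, _⟩ := frk_spec (E_nonempty hn hS) h0 (hno S hS)
    rcases hcard with h | h
    · rw [← h, pow_succ]; ring
    · rw [← h, pow_succ]; ring
  · intro S hS _
    obtain ⟨h0, hsum⟩ := mem_E.1 hS
    obtain ⟨_, _, _, hcard, _, _⟩ := frk_spec (E_nonempty hn hS) h0 (hno S hS)
    intro heq
    rw [heq] at hcard
    omega
  · intro S hS
    obtain ⟨h0, hsum⟩ := mem_E.1 hS
    obtain ⟨a, b, c, _, _, _⟩ := frk_spec (E_nonempty hn hS) h0 (hno S hS)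
    exact mem_E.2 ⟨a, by rw [c, hsum]⟩
  · intro S hS
    obtain ⟨h0, hsum⟩ := mem_E.1 hS
    exact (frk_spec (E_nonempty hn hS) h0 (hno S hS)).2.2.2.2.2

lemma key_onefix {n : ℕ} (hn : 0 < n) {S₀ : Finset ℕ} (h₀ : S₀ ∈ E n) (hfix₀ : isFix S₀)
    (huniq : ∀ S ∈ E n, isFix S → S = S₀) :
    ∑ S ∈ E n, (-1 : ℤ) ^ S.card = (-1) ^ S₀.card := by
  rw [← Finset.add_sum_erase _ _ h₀]
  have hz : ∑ S ∈ (E n).erase S₀, (-1 : ℤ) ^ S.card = 0 := by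
    apply Finset.sum_involution (fun S _ => frk S)
    · intro S hS
      have hSE := Finset.mem_of_mem_erase hS
      have hSne := Finset.ne_of_mem_erase hS
      obtain ⟨h0, hsum⟩ := mem_E.1 hSE
      have hnf : ¬ isFix S := fun h => hSne (huniq S hSE h)
      obtain ⟨_, _, _, hcard, _, _⟩ := frk_spec (E_nonempty hn hSE) h0 hnf
      rcases hcard with h | h
      · rw [← h, pow_succ]; ring
      · rw [← h, pow_succ]; ring
    · intro S hS _
      have hSE := Finset.mem_of_mem_erase hS
      have hSne := Finset.ne_of_mem_erase hS
      obtain ⟨h0, hsum⟩ := mem_E.1 hSE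
      have hnf : ¬ isFix S := fun h => hSne (huniq S hSE h)
      obtain ⟨_, _, _, hcard, _, _⟩ := frk_spec (E_nonempty hn hSE) h0 hnf
      intro heq
      rw [heq] at hcard
      omega
    · intro S hS
      have hSE := Finset.mem_of_mem_erase hS
      have hSne := Finset.ne_of_mem_erase hS
      obtain ⟨h0, hsum⟩ := mem_E.1 hSE
      have hnf : ¬ isFix S := fun h => hSne (huniq S hSE h)
      obtain ⟨a, b, c, _, e, _⟩ := frk_spec (E_nonempty hn hSE) h0 hnf
      apply Finset.mem_erase.2
      refine ⟨fun heq => e (heq ▸ hfix₀), mem_E.2 ⟨a, by rw [c, hsum]⟩⟩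
    · intro S hS
      have hSE := Finset.mem_of_mem_erase hS
      have hSne := Finset.ne_of_mem_erase hS
      obtain ⟨h0, hsum⟩ := mem_E.1 hSE
      have hnf : ¬ isFix S := fun h => hSne (huniq S hSE h)
      exact (frk_spec (E_nonempty hn hSE) h0 hnf).2.2.2.2.2
  rw [hz, add_zero]

lemma key_fix {n l : ℕ} (hn : 0 < n) (hl : 0 < l)
    (hpent : 2 * n = l * (3 * l - 1) ∨ 2 * n = l * (3 * l + 1)) :
    ∑ S ∈ E n, (-1 : ℤ) ^ S.card = (-1) ^ l := by
  rcases hpent with hp | hp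
  · obtain ⟨hne₀, h0₀, hsum₀, hcard₀, hfix₀⟩ := stair1_spec l hl
    have hmem₀ : Finset.Icc l (2 * l - 1) ∈ E n := mem_E.2 ⟨h0₀, by omega⟩
    rw [key_onefix hn hmem₀ hfix₀ ?uniq, hcard₀]
    case uniq =>
      intro S hSE hfx
      obtain ⟨h0, hsum⟩ := mem_E.1 hSE
      rcases fix_char (E_nonempty hn hSE) h0 hfx with ⟨hpos, h2, _, hIcc⟩ | ⟨hpos, h2, _, hIcc⟩
      · rw [hsum] at h2
        have : mn S = l := pent1_inj hpos hl (by omega)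
        rw [hIcc, this]
      · rw [hsum] at h2
        exact absurd (by omega : l * (3 * l - 1) = sg S * (3 * sg S + 1)) (pent_ne hl hpos)
  · obtain ⟨hne₀, h0₀, hsum₀, hcard₀, hfix₀⟩ := stair2_spec l hl
    have hmem₀ : Finset.Icc (l + 1) (2 * l) ∈ E n := mem_E.2 ⟨h0₀, by omega⟩
    rw [key_onefix hn hmem₀ hfix₀ ?uniq, hcard₀]
    case uniq =>
      intro S hSE hfx
      obtain ⟨h0, hsum⟩ := mem_E.1 hSE
      rcases fix_char (E_nonempty hn hSE) h0 hfx with ⟨hpos, h2, _, hIcc⟩ | ⟨hpos, h2, _, hIcc⟩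
      · rw [hsum] at h2
        exact absurd (by omega : mn S * (3 * mn S - 1) = l * (3 * l + 1)) (pent_ne hpos hl)
      · rw [hsum] at h2
        have : sg S = l := pent2_inj (by omega)
        rw [hIcc, this]

lemma sum_toFinset_nodup {m : Multiset ℕ} (h : m.Nodup) : m.toFinset.sum id = m.sum := by
  rw [Finset.sum, Multiset.toFinset_val, h.dedup, Multiset.map_id]

lemma card_filter_eq (n : ℕ) (hn : 0 < n) (q : ℕ → Prop) [DecidablePred q] :
    (Finset.univ.filter fun p : n.Partition => p.parts.Nodup ∧ q (Multiset.card p.parts)).card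
      = ((E n).filter fun S => q S.card).card := by
  apply Finset.card_bij (fun p _ => p.parts.toFinset)
  · intro p hp
    obtain ⟨hnd, hq⟩ := by simpa using Finset.mem_filter.1 hp
    apply Finset.mem_filter.2
    refine ⟨mem_E.2 ⟨?_, ?_⟩, ?_⟩
    · intro h
      exact absurd (p.parts_pos (Multiset.mem_toFinset.1 h)) (by omega)
    · rw [sum_toFinset_nodup hnd, p.parts_sum]
    · rwa [Multiset.toFinset_card_of_nodup hnd]
  · intro p hp p' hp' heq
    obtain ⟨hnd, -⟩ := by simpa using Finset.mem_filter.1 hp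
    obtain ⟨hnd', -⟩ := by simpa using Finset.mem_filter.1 hp'
    apply Nat.Partition.ext
    have := congrArg Finset.val heq
    rwa [Multiset.toFinset_val, Multiset.toFinset_val, hnd.dedup, hnd'.dedup] at this
  · intro S hS
    obtain ⟨hSE, hq⟩ := Finset.mem_filter.1 hS
    obtain ⟨h0, hsum⟩ := mem_E.1 hSE
    refine ⟨⟨S.val, fun hi => ?_, ?_⟩, ?_, ?_⟩
    · have hmem : _ ∈ S := hi
      exact Nat.pos_of_ne_zero fun h => h0 (h ▸ hmem)
    · rw [← hsum, Finset.sum, Multiset.map_id]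
    · apply Finset.mem_filter.2
      refine ⟨Finset.mem_univ _, S.nodup, ?_⟩
      simpa using hq
    · exact Finset.val_toFinset S

lemma signed_eq (n : ℕ) (hn : 0 < n) :
    ((Finset.univ.filter fun p : n.Partition =>
        p.parts.Nodup ∧ Even (Multiset.card p.parts)).card : ℤ) -
    ((Finset.univ.filter fun p : n.Partition =>
        p.parts.Nodup ∧ ¬ Even (Multiset.card p.parts)).card : ℤ) =
    ∑ S ∈ E n, (-1 : ℤ) ^ S.card := by
  rw [card_filter_eq n hn (fun k => Even k), card_filter_eq n hn (fun k => ¬ Even k)]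
  rw [← Finset.sum_filter_add_sum_filter_not (E n) (fun S => Even S.card)]
  have h1 : ∑ S ∈ (E n).filter (fun S => Even S.card), (-1 : ℤ) ^ S.card
      = (((E n).filter fun S => Even S.card).card : ℤ) := by
    rw [Finset.sum_congr rfl (fun S hS => Even.neg_one_pow (Finset.mem_filter.1 hS).2)]
    simp
  have h2 : ∑ S ∈ (E n).filter (fun S => ¬ Even S.card), (-1 : ℤ) ^ S.card
      = -(((E n).filter fun S => ¬ Even S.card).card : ℤ) := by
    rw [Finset.sum_congr rfl (fun S hS =>
      Odd.neg_one_pow (Nat.not_even_iff_odd.1 (Finset.mem_filter.1 hS).2))]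
    simp
  rw [h1, h2]
  ring

lemma no_fix_of_no_pent {n : ℕ} (hn : 0 < n)
    (h : ¬ ∃ l : ℕ, 0 < l ∧ (2 * n = l * (3 * l - 1) ∨ 2 * n = l * (3 * l + 1))) :
    ∀ S ∈ E n, ¬ isFix S := by
  intro S hS hfx
  obtain ⟨h0, hsum⟩ := mem_E.1 hS
  rcases fix_char (E_nonempty hn hS) h0 hfx with ⟨hpos, h2, _, _⟩ | ⟨hpos, h2, _, _⟩
  · exact h ⟨mn S, hpos, Or.inl (by rw [← h2, hsum])⟩
  · exact h ⟨sg S, hpos, Or.inr (by rw [← h2, hsum])⟩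

end PentAux

/-- The signed count of partitions of `n` into distinct parts (even length minus odd
length) is `(-1)^l` when `n = l(3l-1)/2` or `n = l(3l+1)/2` for a positive integer `l`,
and `0` otherwise.  (The conditions are written as `2n = l(3l∓1)` to avoid division.) -/
theorem signed_distinct_partitions_count (n : ℕ) (hn : 0 < n) :
    (∀ l : ℕ, 0 < l → (2 * n = l * (3 * l - 1) ∨ 2 * n = l * (3 * l + 1)) →
      ((Finset.univ.filter fun p : n.Partition => p.parts.Nodup ∧ Even (Multiset.card p.parts)).card : ℤ) -
      ((Finset.univ.filter fun p : n.Partition => p.parts.Nodup ∧ ¬ Even (Multiset.card p.parts)).card : ℤ) =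
        (-1) ^ l) ∧
    ((¬ ∃ l : ℕ, 0 < l ∧ (2 * n = l * (3 * l - 1) ∨ 2 * n = l * (3 * l + 1))) →
      ((Finset.univ.filter fun p : n.Partition => p.parts.Nodup ∧ Even (Multiset.card p.parts)).card : ℤ) -
      ((Finset.univ.filter fun p : n.Partition => p.parts.Nodup ∧ ¬ Even (Multiset.card p.parts)).card : ℤ) =
        0) := by
  constructor
  · intro l hl hpent
    rw [PentAux.signed_eq n hn]
    exact PentAux.key_fix hn hl hpent
  · intro h
    rw [PentAux.signed_eq n hn]
    exact PentAux.key_nofix hn (PentAux.no_fix_of_no_pent hn h)
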